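/- For every γ ≥ 1/4 it holds that h(γ) ≤ 0, where h(γ) = (2γ²+4γ+1)/(2(1+γ)(γ²+2γ)) + 1 − (γ²+2γ)/ln(1+γ). -/

import Mathlib

/-- h(γ) = (2γ²+4γ+1)/(2(1+γ)(γ²+2γ)) + 1 − (γ²+2γ)/ln(1+γ). -/
noncomputable def hfun (γ : ℝ) : ℝ :=
  (2 * γ ^ 2 + 4 * γ + 1) / (2 * (1 + γ) * (γ ^ 2 + 2 * γ)) + 1 -
    (γ ^ 2 + 2 * γ) / Real.log (1 + γ)

lemma log_cubic {x : ℝ} (hx : 0 ≤ x) :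
    Real.log (1 + x) ≤ x - x ^ 2 / 2 + x ^ 3 / 3 := by
  set f : ℝ → ℝ := fun t => t - t ^ 2 / 2 + t ^ 3 / 3 - Real.log (1 + t) with hf
  have hderiv : ∀ t ∈ Set.Ici (0:ℝ),
      HasDerivAt f (1 - t + t ^ 2 - 1 / (1 + t)) t := by
    intro t ht
    have h1 : (0:ℝ) < 1 + t := by simp at ht; linarith
    have hlog : HasDerivAt (fun t : ℝ => Real.log (1 + t)) (1 / (1 + t)) t := by
      have := (Real.hasDerivAt_log (ne_of_gt h1)).comp t
        ((hasDerivAt_id t).const_add 1)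
      exact this.congr_deriv (by simp)
    have hpoly : HasDerivAt (fun t : ℝ => t - t ^ 2 / 2 + t ^ 3 / 3)
        (1 - t + t ^ 2) t := by
      have h2 : HasDerivAt (fun t : ℝ => t ^ 2) (2 * t) t := by
        simpa using (hasDerivAt_pow 2 t)
      have h3 : HasDerivAt (fun t : ℝ => t ^ 3) (3 * t ^ 2) t := by
        simpa using (hasDerivAt_pow 3 t)
      have := ((hasDerivAt_id t).sub (h2.div_const 2)).add (h3.div_const 3)
      exact this.congr_deriv (by ring)
    exact hpoly.sub hlog
  have hmono : MonotoneOn f (Set.Ici (0:ℝ)) := by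
    apply monotoneOn_of_deriv_nonneg (convex_Ici 0)
    · apply ContinuousOn.sub
      · fun_prop
      · apply Real.continuousOn_log.comp (by fun_prop)
        intro t ht
        simp at ht ⊢
        intro h; linarith
    · intro t ht
      exact (hderiv t (by simpa using le_of_lt (by simpa using ht))).differentiableAt
        |>.differentiableWithinAt
    · intro t ht
      simp at ht
      rw [(hderiv t (le_of_lt ht)).deriv]
      have h1 : (0:ℝ) < 1 + t := by linarith
      rw [sub_nonneg, div_le_iff₀ h1]
      nlinarith [pow_nonneg (le_of_lt ht) 3]
  have := hmono (Set.self_mem_Ici) (by simpa using hx) hx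
  simp [hf] at this
  linarith

/-- For every γ ≥ 1/4 it holds that h(γ) ≤ 0. -/
theorem stmt_6 : ∀ γ : ℝ, 1 / 4 ≤ γ → hfun γ ≤ 0 := by
  intro γ hγ
  have hγ0 : (0:ℝ) < γ := by linarith
  have h1γ : (0:ℝ) < 1 + γ := by linarith
  have hB : (0:ℝ) < γ ^ 2 + 2 * γ := by nlinarith
  have hD : (0:ℝ) < 2 * (1 + γ) * (γ ^ 2 + 2 * γ) := by positivity
  have hL : (0:ℝ) < Real.log (1 + γ) := Real.log_pos (by linarith)
  have hLle : Real.log (1 + γ) ≤ γ := by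
    have := Real.log_le_sub_one_of_pos h1γ
    linarith
  unfold hfun
  rcases le_or_gt γ 1 with hle | hgt
  · -- use cubic bound on log
    have hcb : Real.log (1 + γ) ≤ γ - γ ^ 2 / 2 + γ ^ 3 / 3 := log_cubic (le_of_lt hγ0)
    have hLb : (0:ℝ) < γ - γ ^ 2 / 2 + γ ^ 3 / 3 := lt_of_lt_of_le hL hcb
    have hdiv : (γ ^ 2 + 2 * γ) / (γ - γ ^ 2 / 2 + γ ^ 3 / 3) ≤
        (γ ^ 2 + 2 * γ) / Real.log (1 + γ) :=
      div_le_div_of_nonneg_left (le_of_lt hB) hL hcb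
    have key : (2 * γ ^ 2 + 4 * γ + 1) / (2 * (1 + γ) * (γ ^ 2 + 2 * γ)) + 1 ≤
        (γ ^ 2 + 2 * γ) / (γ - γ ^ 2 / 2 + γ ^ 3 / 3) := by
      rw [div_add' _ _ _ (ne_of_gt hD), div_le_div_iff₀ hD hLb]
      have ha : (0:ℝ) ≤ γ - 1/4 := by linarith
      have hb : (0:ℝ) ≤ 1 - γ := by linarith
      nlinarith [pow_nonneg ha 2, pow_nonneg ha 3, pow_nonneg ha 4,
        mul_nonneg (pow_nonneg ha 4) hb,
        mul_nonneg (mul_nonneg (pow_nonneg ha 4) hb) (by linarith : (0:ℝ) ≤ γ + 1/2)]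
    linarith
  · -- γ > 1 : use log (1+γ) ≤ γ
    have hdiv : (γ ^ 2 + 2 * γ) / γ ≤ (γ ^ 2 + 2 * γ) / Real.log (1 + γ) :=
      div_le_div_of_nonneg_left (le_of_lt hB) hL hLle
    have hq : (γ ^ 2 + 2 * γ) / γ = γ + 2 := by
      field_simp
    have hA : (2 * γ ^ 2 + 4 * γ + 1) / (2 * (1 + γ) * (γ ^ 2 + 2 * γ)) ≤ 1 := by
      rw [div_le_one hD]
      nlinarith
    rw [hq] at hdiv
    linarith
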